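/- Let k ≥ 1 and let G be a symmetric k×k real matrix all of whose diagonal entries equal 2. Let S be the upper triangular k×k matrix with S_{ii} = 1, S_{ij} = G_{ij} for i < j, and S_{ij} = 0 for i > j, so that S + Sᵀ = G. For 0 ≤ j ≤ k−1 set R_j = 1 − G·E_{jj}, where E_{jj} is the matrix with 1 in position (j,j) and 0 elsewhere. Then the composition of all the pseudo-reflexions gives the Seifert form: R_{k−1} · R_{k−2} ⋯ R_1 · R_0 = −S · (Sᵀ)⁻¹. -/

import Mathlib

open Matrix

/-- Let `G` be a symmetric real `k × k` matrix with diagonal entries `2`, and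
let `S` be upper triangular with unit diagonal and `S i j = G i j` for `i < j`
(so `S + Sᵀ = G`). With `R j = 1 - G * E_{jj}`, the composition of all the
pseudo-reflexions gives the Seifert form: `R_{k-1} ⋯ R_0 = -S * (Sᵀ)⁻¹`. -/
theorem stmt8 (k : ℕ) (hk : 1 ≤ k)
    (G : Matrix (Fin k) (Fin k) ℝ)
    (hsym : G.IsSymm) (hdiag : ∀ i, G i i = 2)
    (S : Matrix (Fin k) (Fin k) ℝ)
    (hS : S = Matrix.of fun i j : Fin k =>
      if i = j then 1 else if i < j then G i j else 0)
    (R : Fin k → Matrix (Fin k) (Fin k) ℝ)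
    (hR : ∀ j, R j = 1 - G * Matrix.single j j 1) :
    ((List.finRange k).reverse.map R).prod = -(S * (Sᵀ)⁻¹) := by
  have hGsym : ∀ i j, G i j = G j i := fun i j => (hsym.apply j i)
  -- G = S + Sᵀ
  have hG : G = S + Sᵀ := by
    ext i j
    rcases lt_trichotomy i j with h | h | h
    · simp [hS, h, h.ne, h.ne', not_lt.mpr h.le, Matrix.transpose_apply]
    · subst h; simp [hS, hdiag i, Matrix.transpose_apply]; ring
    · simp [hS, h, h.ne, h.ne', not_lt.mpr h.le, Matrix.transpose_apply, hGsym i j]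
  set T := Sᵀ with hT
  -- S is upper triangular with unit diagonal, so det S = 1
  have hdetS : S.det = 1 := by
    have hbt : S.BlockTriangular id := by
      intro i j hij
      simp only [id] at hij
      simp [hS, hij.ne', not_lt.mpr hij.le]
    rw [Matrix.det_of_upperTriangular hbt]
    simp [hS]
  have hdetT : T.det = 1 := by rw [hT, Matrix.det_transpose, hdetS]
  have hTinv : T * T⁻¹ = 1 := by
    apply Matrix.mul_nonsing_inv
    rw [hdetT]; exact isUnit_one
  set B := T⁻¹ with hB
  -- key relation from T * B = 1
  have key : ∀ m j : Fin k,
      B m j + ∑ i : Fin k, (if (i : ℕ) < (m : ℕ) then G m i * B i j else 0)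
        = if m = j then 1 else 0 := by
    intro m j
    have h1 : (T * B) m j = if m = j then 1 else 0 := by
      rw [hTinv]; simp [Matrix.one_apply]
    rw [Matrix.mul_apply] at h1
    have h2 : ∀ i : Fin k, T m i * B i j
        = (if i = m then B i j else 0)
          + (if (i : ℕ) < (m : ℕ) then G m i * B i j else 0) := by
      intro i
      have : T m i = S i m := rfl
      rw [this, hS]
      rcases lt_trichotomy i m with h | h | h
      · have : (i : ℕ) < (m : ℕ) := h
        simp [h.ne, h, this, hGsym i m]
      · subst h; simp
      · have h3 : ¬ ((i : ℕ) < (m : ℕ)) := not_lt.mpr h.le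
        simp [h.ne', not_lt.mpr h.le, h3]
    rw [Finset.sum_congr rfl (fun i _ => h2 i), Finset.sum_add_distrib,
      Finset.sum_ite_eq' Finset.univ m (fun i => B i j)] at h1
    simpa using h1
  -- partial truncations of B
  set A : ℕ → Matrix (Fin k) (Fin k) ℝ :=
    fun m => Matrix.of fun i j => if (i : ℕ) < m then B i j else 0 with hA
  have main : ∀ m, m ≤ k →
      (((List.finRange k).take m).reverse.map R).prod = 1 - G * A m := by
    intro m
    induction m with
    | zero =>
      intro _
      have : A 0 = 0 := by ext i j; simp [hA]
      simp [this]
    | succ m ih =>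
      intro hm
      have hmk : m < k := hm
      have htake : (List.finRange k).take (m + 1)
          = (List.finRange k).take m ++ [⟨m, hmk⟩] := by
        rw [List.take_succ]
        congr 1
        have hlen : m < (List.finRange k).length := by simpa using hmk
        rw [List.getElem?_eq_getElem hlen]
        simp
      set fm : Fin k := ⟨m, hmk⟩ with hfm
      have hstep : A (m + 1) = A m + Matrix.single fm fm 1
          - Matrix.single fm fm 1 * (G * A m) := by
        ext i j
        simp only [Matrix.add_apply, Matrix.sub_apply, hA, Matrix.of_apply]
        have hE : ∀ N : Matrix (Fin k) (Fin k) ℝ,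
            ((Matrix.single fm fm 1 * N : Matrix (Fin k) (Fin k) ℝ)) i j
              = if i = fm then N fm j else 0 := by
          intro N
          rw [Matrix.mul_apply]
          rcases eq_or_ne i fm with h | h
          · subst h
            simp [Matrix.single, Finset.sum_ite_eq]
          · simp [Matrix.single, h, Ne.symm h]
        rw [hE]
        rcases lt_trichotomy (i : ℕ) m with h | h | h
        · have hne : i ≠ fm := by
            intro he; rw [he] at h; exact absurd h (lt_irrefl m)
          simp [h, h.trans (Nat.lt_succ_self m), Matrix.single, hne, Ne.symm hne]
        · have hie : i = fm := Fin.ext h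
          have hGA : (G * A m) fm j
              = ∑ x : Fin k, (if (x : ℕ) < m then G fm x * B x j else 0) := by
            rw [Matrix.mul_apply]
            apply Finset.sum_congr rfl
            intro x _
            simp [hA, mul_ite]
          have hkey := key fm j
          have hmfm : (fm : ℕ) = m := rfl
          subst hie
          simp only [hmfm] at hkey
          have hBm : B fm j = (if fm = j then 1 else 0)
              - ∑ x : Fin k, (if (x : ℕ) < m then G fm x * B x j else 0) := by
            linarith [hkey]
          simp only [lt_irrefl, if_false, Nat.lt_succ_self, if_true, hGA, hBm,
            Matrix.single, hmfm]
          rcases eq_or_ne fm j with h | h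
          · subst h; simp; exact hGA.symm
          · simp [h, Fin.val_eq_val, (fun he => h (Fin.ext he) : ¬((fm:ℕ) = (j:ℕ)))]; exact hGA.symm
        · have hne : i ≠ fm := by
            intro he; rw [he] at h; exact absurd h (lt_irrefl m)
          have h1 : ¬ ((i : ℕ) < m) := by omega
          have h2 : ¬ ((i : ℕ) < m + 1) := by omega
          simp [h1, h2, Matrix.single, hne, Ne.symm hne]
      rw [htake, List.reverse_append, List.map_append, List.prod_append]
      simp only [List.reverse_singleton, List.map_cons, List.map_nil,
        List.prod_cons, List.prod_nil]
      rw [ih (le_of_lt hmk)]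
      rw [hR fm, hstep]
      simp only [Matrix.mul_sub, Matrix.mul_add, Matrix.sub_mul, Matrix.one_mul,
        Matrix.mul_one]
      noncomm_ring
  have hfin : ((List.finRange k).reverse.map R).prod = 1 - G * B := by
    have h1 := main k (le_refl k)
    rw [List.take_of_length_le (by simp)] at h1
    have h2 : A k = B := by
      ext i j; simp [hA, i.isLt]
    rw [h1, h2]
  rw [hfin, hG]
  rw [Matrix.add_mul, hTinv]
  abel
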